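/- Let 0 < a ≤ b be real numbers and let t₁, …, tₙ be real numbers (n ≥ 1) such that a ≤ exp(tᵢ) ≤ b for every i. Then −(1/n) · ∑_{i=1}^n tᵢ + log((1/n) · ∑_{i=1}^n exp(tᵢ)) ≤ −log a − log b + 2 · log((a + b)/2). -/

import Mathlib

open Finset Real

lemma log_comb {x y μ ν : ℝ} (hx : 0 < x) (hy : 0 < y) (hμ : 0 ≤ μ) (hν : 0 ≤ ν)
    (h : μ + ν = 1) : μ * Real.log x + ν * Real.log y ≤ Real.log (μ * x + ν * y) := by
  have := strictConcaveOn_log_Ioi.concaveOn.2 (Set.mem_Ioi.2 hx) (Set.mem_Ioi.2 hy) hμ hν h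
  simpa [smul_eq_mul] using this

lemma log_chord {a b x : ℝ} (ha : 0 < a) (hab : a < b) (hax : a ≤ x) (hxb : x ≤ b) :
    ((b - x) * Real.log a + (x - a) * Real.log b) / (b - a) ≤ Real.log x := by
  have hba : (0:ℝ) < b - a := by linarith
  have hb : (0:ℝ) < b := by linarith
  have h := log_comb (μ := (b - x)/(b - a)) (ν := (x - a)/(b - a)) ha hb
    (div_nonneg (by linarith) (le_of_lt hba)) (div_nonneg (by linarith) (le_of_lt hba))
    (by field_simp; ring)
  have hx : (b - x)/(b - a) * a + (x - a)/(b - a) * b = x := by field_simp; ring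
  rw [hx] at h
  calc ((b - x) * Real.log a + (x - a) * Real.log b) / (b - a)
      = (b - x)/(b - a) * Real.log a + (x - a)/(b - a) * Real.log b := by ring
    _ ≤ Real.log x := h

/-- g(x) := log x − Λ(x) ≤ 2 g(mid) for x ∈ [a,b]. -/
lemma gap_bound {a b x : ℝ} (ha : 0 < a) (hab : a < b) (hax : a ≤ x) (hxb : x ≤ b) :
    Real.log x - ((b - x) * Real.log a + (x - a) * Real.log b) / (b - a) ≤
      -Real.log a - Real.log b + 2 * Real.log ((a + b) / 2) := by
  have hba : (0:ℝ) < b - a := by linarith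
  have hb : (0:ℝ) < b := by linarith
  have hx : 0 < x := lt_of_lt_of_le ha hax
  set m : ℝ := (a + b) / 2 with hm
  have hmx : a < m := by simp [hm]; linarith
  have hmb : m < b := by simp [hm]; linarith
  -- g x ≥ 0
  have hg0 : 0 ≤ Real.log x - ((b - x) * Real.log a + (x - a) * Real.log b) / (b - a) := by
    have := log_chord ha hab hax hxb; linarith
  -- g m expression
  have hΛm : ((b - m) * Real.log a + (m - a) * Real.log b) / (b - a)
      = (Real.log a + Real.log b) / 2 := by
    field_simp [hm]; ring
  rcases le_or_gt x m with hxm | hxm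
  · -- m = λ x + (1-λ) b, λ = (b-m)/(b-x)
    have hbx : (0:ℝ) < b - x := by linarith
    set lam : ℝ := (b - m)/(b - x) with hl
    have hl1 : lam ≤ 1 := by rw [hl]; rw [div_le_one hbx]; linarith
    have hl2 : (1:ℝ)/2 ≤ lam := by
      rw [hl, le_div_iff₀ hbx]
      have : b - m = (b - a)/2 := by rw [hm]; ring
      rw [this]; nlinarith
    have hl0 : 0 < lam := by linarith
    have hcomb : lam * x + (1 - lam) * b = m := by
      rw [hl]; field_simp; ring
    have hlog : lam * Real.log x + (1 - lam) * Real.log b ≤ Real.log m := by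
      have := log_comb (μ := lam) (ν := 1 - lam) hx hb (le_of_lt hl0) (by linarith) (by ring)
      rwa [hcomb] at this
    -- Λ is affine: Λ(m) = lam * Λ(x) + (1-lam) * Λ(b); Λ(b) = log b
    have hΛ : lam * (((b - x) * Real.log a + (x - a) * Real.log b) / (b - a))
        + (1 - lam) * Real.log b
        = ((b - m) * Real.log a + (m - a) * Real.log b) / (b - a) := by
      rw [← hcomb]; field_simp; ring
    -- so lam * g x ≤ g m
    have hgm : lam * (Real.log x - ((b - x) * Real.log a + (x - a) * Real.log b) / (b - a))
        ≤ Real.log m - (Real.log a + Real.log b) / 2 := by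
      rw [← hΛm, ← hΛ]; nlinarith [hlog]
    nlinarith [hgm, hg0, hl2]
  · -- symmetric: m = λ x + (1-λ) a, λ = (m-a)/(x-a)
    have hbx : (0:ℝ) < x - a := by linarith
    set lam : ℝ := (m - a)/(x - a) with hl
    have hl1 : lam ≤ 1 := by rw [hl, div_le_one hbx]; linarith
    have hl2 : (1:ℝ)/2 ≤ lam := by
      rw [hl, le_div_iff₀ hbx]
      have : m - a = (b - a)/2 := by rw [hm]; ring
      rw [this]; nlinarith
    have hl0 : 0 < lam := by linarith
    have hcomb : lam * x + (1 - lam) * a = m := by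
      rw [hl]; field_simp; ring
    have hlog : lam * Real.log x + (1 - lam) * Real.log a ≤ Real.log m := by
      have := log_comb (μ := lam) (ν := 1 - lam) hx ha (le_of_lt hl0) (by linarith) (by ring)
      rwa [hcomb] at this
    have hΛ : lam * (((b - x) * Real.log a + (x - a) * Real.log b) / (b - a))
        + (1 - lam) * Real.log a
        = ((b - m) * Real.log a + (m - a) * Real.log b) / (b - a) := by
      rw [← hcomb]; field_simp; ring
    have hgm : lam * (Real.log x - ((b - x) * Real.log a + (x - a) * Real.log b) / (b - a))
        ≤ Real.log m - (Real.log a + Real.log b) / 2 := by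
      rw [← hΛm, ← hΛ]; nlinarith [hlog]
    nlinarith [hgm, hg0, hl2]

/-- Intermediate step of Corollary 1: applying the global Jensen-gap bound to `f = −log`
on `[a, b]` with `xᵢ = exp tᵢ`. -/
theorem neg_log_jensen_gap_bound (a b : ℝ) (ha : 0 < a) (hab : a ≤ b) (n : ℕ) (hn : 1 ≤ n)
    (t : Fin n → ℝ) (ht : ∀ i, a ≤ Real.exp (t i) ∧ Real.exp (t i) ≤ b) :
    -((1 / (n : ℝ)) * ∑ i, t i) + Real.log ((1 / (n : ℝ)) * ∑ i, Real.exp (t i)) ≤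
      -Real.log a - Real.log b + 2 * Real.log ((a + b) / 2) := by
  have hn0 : (0:ℝ) < n := by exact_mod_cast hn
  rcases eq_or_lt_of_le hab with rfl | hab
  · -- a = b
    have hti : ∀ i, t i = Real.log a := by
      intro i
      have h := ht i
      have : Real.exp (t i) = a := le_antisymm h.2 h.1
      rw [← this, Real.log_exp]
    have h1 : ∑ i, t i = n * Real.log a := by
      simp [hti, Finset.sum_const, mul_comm]
    have h2 : ∑ i, Real.exp (t i) = n * a := by
      have : ∀ i, Real.exp (t i) = a := fun i => le_antisymm (ht i).2 (ht i).1
      simp [this, Finset.sum_const, mul_comm]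
    rw [h1, h2]
    have : (1 / (n:ℝ)) * ((n:ℝ) * a) = a := by field_simp
    rw [this]
    have : (1 / (n:ℝ)) * ((n:ℝ) * Real.log a) = Real.log a := by field_simp
    rw [this]
    have : (a + a) / 2 = a := by ring
    rw [this]; ring_nf; simp
  · have hba : (0:ℝ) < b - a := by linarith
    set S : ℝ := (1 / (n:ℝ)) * ∑ i, Real.exp (t i) with hS
    have haS : a ≤ S := by
      rw [hS]
      have : (n:ℝ) * a ≤ ∑ i, Real.exp (t i) := by
        calc (n:ℝ) * a = ∑ _i : Fin n, a := by simp [Finset.sum_const, mul_comm]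
          _ ≤ _ := Finset.sum_le_sum fun i _ => (ht i).1
      calc a = (1/(n:ℝ)) * ((n:ℝ) * a) := by field_simp
        _ ≤ _ := by
          apply mul_le_mul_of_nonneg_left this (by positivity)
    have hSb : S ≤ b := by
      rw [hS]
      have : ∑ i, Real.exp (t i) ≤ (n:ℝ) * b := by
        calc ∑ i, Real.exp (t i) ≤ ∑ _i : Fin n, b := Finset.sum_le_sum fun i _ => (ht i).2
          _ = (n:ℝ) * b := by simp [Finset.sum_const, mul_comm]
      calc (1/(n:ℝ)) * ∑ i, Real.exp (t i) ≤ (1/(n:ℝ)) * ((n:ℝ) * b) := by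
            apply mul_le_mul_of_nonneg_left this (by positivity)
        _ = b := by field_simp
    -- per-term chord bound summed
    have hsum : ((b - S) * Real.log a + (S - a) * Real.log b) / (b - a)
        ≤ (1 / (n:ℝ)) * ∑ i, t i := by
      have hterm : ∀ i, ((b - Real.exp (t i)) * Real.log a + (Real.exp (t i) - a) * Real.log b)
          / (b - a) ≤ t i := by
        intro i
        have := log_chord ha hab (ht i).1 (ht i).2
        rwa [Real.log_exp] at this
      have hs : ∑ i, (((b - Real.exp (t i)) * Real.log a + (Real.exp (t i) - a) * Real.log b)
          / (b - a)) ≤ ∑ i, t i := Finset.sum_le_sum fun i _ => hterm i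
      have heq : ∑ i, (((b - Real.exp (t i)) * Real.log a + (Real.exp (t i) - a) * Real.log b)
          / (b - a))
          = ((n:ℝ) * b - ∑ i, Real.exp (t i)) * Real.log a / (b - a)
            + ((∑ i, Real.exp (t i)) - (n:ℝ) * a) * Real.log b / (b - a) := by
        have hnum : ∑ i, ((b - Real.exp (t i)) * Real.log a + (Real.exp (t i) - a) * Real.log b)
            = ((n:ℝ) * b - ∑ i, Real.exp (t i)) * Real.log a
              + ((∑ i, Real.exp (t i)) - (n:ℝ) * a) * Real.log b := by
          rw [Finset.sum_add_distrib, ← Finset.sum_mul, ← Finset.sum_mul,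
            Finset.sum_sub_distrib, Finset.sum_sub_distrib]
          simp [Finset.sum_const, mul_comm]
        rw [← Finset.sum_div, hnum]; ring
      rw [heq] at hs
      have hE : ∑ i, Real.exp (t i) = (n:ℝ) * S := by rw [hS]; field_simp
      calc ((b - S) * Real.log a + (S - a) * Real.log b) / (b - a)
          = (1/(n:ℝ)) * (((n:ℝ) * b - (n:ℝ) * S) * Real.log a / (b - a)
            + ((n:ℝ) * S - (n:ℝ) * a) * Real.log b / (b - a)) := by field_simp
        _ ≤ (1/(n:ℝ)) * ∑ i, t i := by
            apply mul_le_mul_of_nonneg_left _ (by positivity)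
            rw [← hE]; exact hs
    have := gap_bound ha hab haS hSb
    linarith
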